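/- arXiv:1310.1004 — 2 statements merged into one kernel-verified Lean document; each statement's English description precedes it below -/
import Mathlib

section
/- Let n ≥ 3 and let φ be a permutation of I = {1,…,n}. The dual configuration 𝔐°_{(n,φ)} (whose points are the blocks of 𝔐_{(n,φ)}, whose blocks are the points of 𝔐_{(n,φ)}, and whose incidence is the reversed membership relation) is isomorphic to 𝔐_{(n,φ)}. -/
abbrev MPoint (n : ℕ) := Fin n ⊕ Fin n

/-- The block `A_i = (A \ {a_i}) ∪ {b_i}`. -/
def Ablock (n : ℕ) (i : Fin n) : Set (MPoint n) :=
  Sum.inl '' {j | j ≠ i} ∪ {Sum.inr i}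

/-- The block `B_i = (B \ {b_i}) ∪ {a_{φ(i)}}`. -/
def Bblock (n : ℕ) (φ : Equiv.Perm (Fin n)) (i : Fin n) : Set (MPoint n) :=
  Sum.inr '' {j | j ≠ i} ∪ {Sum.inl (φ i)}

def ABlocks (n : ℕ) : Set (Set (MPoint n)) := Set.range (Ablock n)

def BBlocks (n : ℕ) (φ : Equiv.Perm (Fin n)) : Set (Set (MPoint n)) := Set.range (Bblock n φ)

/-- The blocks of the Möbius `n`-pair `𝔐_{(n,φ)}`; its point set is all of `MPoint n`. -/
def MBlocks (n : ℕ) (φ : Equiv.Perm (Fin n)) : Set (Set (MPoint n)) :=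
  ABlocks n ∪ BBlocks n φ

@[simp] theorem inl_mem_Ablock {n : ℕ} {j i : Fin n} :
    Sum.inl j ∈ Ablock n i ↔ j ≠ i := by simp [Ablock]

@[simp] theorem inr_mem_Ablock {n : ℕ} {j i : Fin n} :
    Sum.inr j ∈ Ablock n i ↔ j = i := by simp [Ablock]

@[simp] theorem inl_mem_Bblock {n : ℕ} {φ : Equiv.Perm (Fin n)} {j i : Fin n} :
    Sum.inl j ∈ Bblock n φ i ↔ j = φ i := by simp [Bblock]

@[simp] theorem inr_mem_Bblock {n : ℕ} {φ : Equiv.Perm (Fin n)} {j i : Fin n} :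
    Sum.inr j ∈ Bblock n φ i ↔ j ≠ i := by simp [Bblock]

theorem Ablock_inj {n : ℕ} {i i' : Fin n} (h : Ablock n i = Ablock n i') : i = i' := by
  have : (Sum.inr i : MPoint n) ∈ Ablock n i' := by rw [← h]; simp
  simpa using this

theorem Bblock_inj {n : ℕ} {φ : Equiv.Perm (Fin n)} {i i' : Fin n}
    (h : Bblock n φ i = Bblock n φ i') : i = i' := by
  by_contra hne
  have : (Sum.inr i : MPoint n) ∈ Bblock n φ i := by rw [h]; simp [hne]
  simp at this

theorem Ablock_ne_Bblock {n : ℕ} (hn : 3 ≤ n) {φ : Equiv.Perm (Fin n)} {i i' : Fin n} :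
    Ablock n i ≠ Bblock n φ i' := by
  intro h
  have hcard : 1 < ({i}ᶜ : Finset (Fin n)).card := by
    rw [Finset.card_compl]
    simp only [Finset.card_singleton, Fintype.card_fin]
    omega
  obtain ⟨j₁, hj₁, j₂, hj₂, hne⟩ := Finset.one_lt_card.mp hcard
  simp only [Finset.mem_compl, Finset.mem_singleton] at hj₁ hj₂
  have h1 : (Sum.inl j₁ : MPoint n) ∈ Bblock n φ i' := by rw [← h]; simp [hj₁]
  have h2 : (Sum.inl j₂ : MPoint n) ∈ Bblock n φ i' := by rw [← h]; simp [hj₂]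
  simp only [inl_mem_Bblock] at h1 h2
  exact hne (h1.trans h2.symm)

/-- The dual configuration of 𝔐_{(n,φ)} (points: the blocks; blocks: for each point p
the pencil of blocks through p) is isomorphic to 𝔐_{(n,φ)}. -/
theorem stmt2 (n : ℕ) (hn : 3 ≤ n) (φ : Equiv.Perm (Fin n)) :
    ∃ f : {l : Set (MPoint n) // l ∈ MBlocks n φ} ≃ MPoint n,
      ∀ T : Set {l : Set (MPoint n) // l ∈ MBlocks n φ},
        (∃ p : MPoint n, T = {l | p ∈ l.1}) ↔ (f '' T) ∈ MBlocks n φ := by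
  -- σ conjugating φ to φ⁻¹
  have hconj : IsConj φ φ⁻¹ := by
    rw [Equiv.Perm.isConj_iff_cycleType_eq, Equiv.Perm.cycleType_inv]
  obtain ⟨c, hc⟩ := isConj_iff.mp hconj
  -- pointwise relation: φ (c⁻¹ x) = c⁻¹ (φ⁻¹ x)
  have key : ∀ x, φ (c⁻¹ x) = c⁻¹ (φ⁻¹ x) := by
    intro x
    conv_rhs => rw [← hc]
    simp [Equiv.Perm.mul_apply]
  set g : MPoint n → {l : Set (MPoint n) // l ∈ MBlocks n φ} :=
    fun x => match x with
      | Sum.inl i => ⟨Bblock n φ (c i), Or.inr ⟨c i, rfl⟩⟩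
      | Sum.inr i => ⟨Ablock n (c i), Or.inl ⟨c i, rfl⟩⟩ with hg
  have hginj : Function.Injective g := by
    intro x y hxy
    rcases x with i | i <;> rcases y with j | j <;>
      simp only [hg, Subtype.mk.injEq] at hxy
    · exact congrArg Sum.inl (c.injective (Bblock_inj (congrArg Subtype.val hxy)))
    · exact absurd (congrArg Subtype.val hxy).symm (Ablock_ne_Bblock hn)
    · exact absurd (congrArg Subtype.val hxy) (Ablock_ne_Bblock hn)
    · exact congrArg Sum.inr (c.injective (Ablock_inj (congrArg Subtype.val hxy)))
  have hgsurj : Function.Surjective g := by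
    rintro ⟨l, (⟨i, rfl⟩ | ⟨i, rfl⟩)⟩
    · exact ⟨Sum.inr (c⁻¹ i), by simp [hg]⟩
    · exact ⟨Sum.inl (c⁻¹ i), by simp [hg]⟩
  set e := Equiv.ofBijective g ⟨hginj, hgsurj⟩ with he
  refine ⟨e.symm, fun T => ?_⟩
  have himg : e.symm '' T = g ⁻¹' T := by
    ext x
    simp only [Set.mem_preimage]
    constructor
    · rintro ⟨l, hl, rfl⟩
      rw [show g (e.symm l) = e (e.symm l) from rfl, e.apply_symm_apply]
      exact hl
    · intro hx
      exact ⟨g x, hx, by rw [he]; exact Equiv.ofBijective_symm_apply_apply g _ x⟩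
  rw [himg]
  -- pencils compute to blocks
  have hA : ∀ j : Fin n, g ⁻¹' {l | (Sum.inr j : MPoint n) ∈ l.1} = Ablock n (c⁻¹ j) := by
    intro j
    ext x
    rcases x with i | i <;>
      simp [hg, Set.mem_preimage, eq_comm, Equiv.eq_symm_apply, ne_eq]
  have hB : ∀ j : Fin n, g ⁻¹' {l | (Sum.inl j : MPoint n) ∈ l.1} = Bblock n φ (c⁻¹ j) := by
    intro j
    ext x
    rcases x with i | i <;>
      simp [hg, Set.mem_preimage, ne_eq]
    · rw [← Equiv.Perm.inv_def, key]
      constructor <;> (intro h; simp [h])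
    · constructor <;> (intro h h'; exact h (by simp [h']))
  constructor
  · rintro ⟨p, rfl⟩
    rcases p with j | j
    · rw [hB]; exact Or.inr ⟨c⁻¹ j, rfl⟩
    · rw [hA]; exact Or.inl ⟨c⁻¹ j, rfl⟩
  · rintro (⟨i, hi⟩ | ⟨i, hi⟩)
    · refine ⟨Sum.inr (c i), ?_⟩
      have : g ⁻¹' {l | (Sum.inr (c i) : MPoint n) ∈ l.1} = g ⁻¹' T := by
        rw [hA, ← hi]; simp
      exact ((Set.preimage_injective.mpr hgsurj) this).symm
    · refine ⟨Sum.inl (c i), ?_⟩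
      have : g ⁻¹' {l | (Sum.inl (c i) : MPoint n) ∈ l.1} = g ⁻¹' T := by
        rw [hB, ← hi]; simp
      exact ((Set.preimage_injective.mpr hgsurj) this).symm
end

section
/- Let n ≥ 4, let φ be a permutation of I = {1,…,n}, and let S_1, S_2 be the two simplices of a special decomposition of 𝔐_{(n,φ)}. Then for each i ∈ I and each t = 1,2, the simplex S_t does not contain both the block B_i and the point b_i, and does not contain both the block A_i and the point a_i. -/
/-- A "simplex" of a decomposition: a pair (points, blocks). -/
abbrev MSimplex (n : ℕ) := Set (MPoint n) × Set (Set (MPoint n))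

def SimplexA (n : ℕ) : MSimplex n := (Set.range Sum.inl, ABlocks n)

def SimplexB (n : ℕ) (φ : Equiv.Perm (Fin n)) : MSimplex n := (Set.range Sum.inr, BBlocks n φ)

/-- A decomposition of 𝔐_{(n,φ)} into two complementary mutually inscribed n-simplices. -/
def IsDecomp (n : ℕ) (φ : Equiv.Perm (Fin n)) (S₁ S₂ : MSimplex n) : Prop :=
  S₁.1 ∪ S₂.1 = Set.univ ∧ Disjoint S₁.1 S₂.1 ∧ S₁.1.ncard = n ∧ S₂.1.ncard = n ∧
  S₁.2 ∪ S₂.2 = MBlocks n φ ∧ Disjoint S₁.2 S₂.2 ∧ S₁.2.ncard = n ∧ S₂.2.ncard = n ∧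
  (∀ l ∈ S₁.2, (l ∩ S₁.1).ncard = n - 1 ∧ (l ∩ S₂.1).ncard = 1) ∧
  (∀ l ∈ S₂.2, (l ∩ S₂.1).ncard = n - 1 ∧ (l ∩ S₁.1).ncard = 1) ∧
  (∀ p ∈ S₁.1, {l ∈ S₁.2 | p ∈ l}.ncard = n - 1 ∧ {l ∈ S₂.2 | p ∈ l}.ncard = 1) ∧
  (∀ p ∈ S₂.1, {l ∈ S₂.2 | p ∈ l}.ncard = n - 1 ∧ {l ∈ S₁.2 | p ∈ l}.ncard = 1)

/-- A special decomposition: one in which both simplices differ from S_A and S_B. -/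
def IsSpecialDecomp (n : ℕ) (φ : Equiv.Perm (Fin n)) (S₁ S₂ : MSimplex n) : Prop :=
  IsDecomp n φ S₁ S₂ ∧
  S₁ ≠ SimplexA n ∧ S₁ ≠ SimplexB n φ ∧ S₂ ≠ SimplexA n ∧ S₂ ≠ SimplexB n φ

section Aux

variable {n : ℕ} {φ : Equiv.Perm (Fin n)} {i x : Fin n}

lemma mem_Ablock_inl : Sum.inl x ∈ Ablock n i ↔ x ≠ i := by simp [Ablock]

lemma mem_Ablock_inr : Sum.inr x ∈ Ablock n i ↔ x = i := by simp [Ablock]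

lemma mem_Bblock_inl : Sum.inl x ∈ Bblock n φ i ↔ x = φ i := by simp [Bblock]

lemma mem_Bblock_inr : Sum.inr x ∈ Bblock n φ i ↔ x ≠ i := by simp [Bblock]

lemma Ablock_inj_s5 : Function.Injective (Ablock n) := fun i j h => by
  have : Sum.inr i ∈ Ablock n j := h ▸ mem_Ablock_inr.mpr rfl
  exact mem_Ablock_inr.mp this

lemma Bblock_inj_s5 : Function.Injective (Bblock n φ) := fun i j h => by
  have : Sum.inl (φ i) ∈ Bblock n φ j := h ▸ mem_Bblock_inl.mpr rfl
  exact φ.injective (mem_Bblock_inl.mp this)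

lemma ncard_ABlocks : (ABlocks n).ncard = n := by
  rw [ABlocks, ← Nat.card_coe_set_eq, Nat.card_range_of_injective Ablock_inj_s5,
    Nat.card_eq_fintype_card, Fintype.card_fin]

lemma ncard_BBlocks : (BBlocks n φ).ncard = n := by
  rw [BBlocks, ← Nat.card_coe_set_eq, Nat.card_range_of_injective Bblock_inj_s5,
    Nat.card_eq_fintype_card, Fintype.card_fin]

lemma ncard_range_inl : (Set.range (Sum.inl : Fin n → MPoint n)).ncard = n := by
  rw [← Nat.card_coe_set_eq, Nat.card_range_of_injective Sum.inl_injective,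
    Nat.card_eq_fintype_card, Fintype.card_fin]

lemma ncard_range_inr : (Set.range (Sum.inr : Fin n → MPoint n)).ncard = n := by
  rw [← Nat.card_coe_set_eq, Nat.card_range_of_injective Sum.inr_injective,
    Nat.card_eq_fintype_card, Fintype.card_fin]

lemma ncard_le_two {α : Type*} {s : Set α} {a b : α} (h : s ⊆ {a, b}) : s.ncard ≤ 2 := by
  refine le_trans (Set.ncard_le_ncard h (Set.toFinite _)) ?_
  refine le_trans (Set.ncard_insert_le _ _) ?_
  simp

lemma keyB {n : ℕ} (hn : 4 ≤ n) (φ : Equiv.Perm (Fin n)) (S₁ S₂ : MSimplex n)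
    (hd : IsDecomp n φ S₁ S₂) (hBne : S₁ ≠ SimplexB n φ) (i : Fin n) :
    ¬(Bblock n φ i ∈ S₁.2 ∧ Sum.inr i ∈ S₁.1) := by
  rintro ⟨hBl, hb⟩
  obtain ⟨hu, hdis, hc1, hc2, hbu, hbdis, hbc1, hbc2, hl1, hl2, hp1, hp2⟩ := hd
  have hni : (Sum.inr i : MPoint n) ∉ Bblock n φ i := fun h => (mem_Bblock_inr.mp h) rfl
  have hcardInt : (Bblock n φ i ∩ S₁.1).ncard = n - 1 := (hl1 _ hBl).1
  have hT : insert (Sum.inr i) (Bblock n φ i ∩ S₁.1) ⊆ S₁.1 := by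
    rintro x (rfl | hx)
    · exact hb
    · exact hx.2
  have hTc : (insert (Sum.inr i) (Bblock n φ i ∩ S₁.1)).ncard = n := by
    rw [Set.ncard_insert_of_notMem (fun h => hni h.1), hcardInt]; omega
  have hS1eq : insert (Sum.inr i) (Bblock n φ i ∩ S₁.1) = S₁.1 :=
    Set.eq_of_subset_of_ncard_le hT (by rw [hTc, hc1])
  have hsub : ∀ x ∈ S₁.1, x = Sum.inr i ∨ x ∈ Bblock n φ i := by
    intro x hx
    rw [← hS1eq] at hx
    rcases hx with rfl | hx
    · exact Or.inl rfl
    · exact Or.inr hx.1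
  have hinl : ∀ x : Fin n, Sum.inl x ∈ S₁.1 → x = φ i := by
    intro x hx
    rcases hsub _ hx with h | h
    · exact absurd h (by simp)
    · exact mem_Bblock_inl.mp h
  -- no A-block lies in S₁.2
  have hnoA : ∀ j, Ablock n j ∉ S₁.2 := by
    intro j hj
    have h1 : (Ablock n j ∩ S₁.1).ncard = n - 1 := (hl1 _ hj).1
    have h2 : Ablock n j ∩ S₁.1 ⊆ {Sum.inl (φ i), Sum.inr j} := by
      rintro (x | x) ⟨hxA, hxS⟩
      · exact Or.inl (by rw [hinl x hxS])
      · exact Or.inr (by rw [mem_Ablock_inr.mp hxA]; exact rfl)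
    have := ncard_le_two h2
    omega
  have hsubB : S₁.2 ⊆ BBlocks n φ := by
    intro l hl
    have hlm : l ∈ MBlocks n φ := by
      rw [← hbu]; exact Set.mem_union_left _ hl
    rcases hlm with hA | hB'
    · obtain ⟨j, rfl⟩ := hA
      exact absurd hl (hnoA j)
    · exact hB'
  have hS2eq : S₁.2 = BBlocks n φ :=
    Set.eq_of_subset_of_ncard_le hsubB (by rw [ncard_BBlocks, hbc1])
  have hne : S₁.1 ≠ Set.range Sum.inr := by
    intro he
    exact hBne (Prod.ext he hS2eq)
  have hnsub : ¬ S₁.1 ⊆ Set.range Sum.inr := by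
    intro hs
    exact hne (Set.eq_of_subset_of_ncard_le hs (by rw [ncard_range_inr, hc1]))
  obtain ⟨p, hp, hpn⟩ := Set.not_subset.mp hnsub
  have hpval : p = Sum.inl (φ i) := by
    rcases hsub p hp with rfl | hpB
    · exact absurd ⟨i, rfl⟩ hpn
    · rcases p with x | x
      · rw [mem_Bblock_inl.mp hpB]
      · exact absurd ⟨x, rfl⟩ hpn
  subst hpval
  have hcnt : {l ∈ S₁.2 | Sum.inl (φ i) ∈ l}.ncard = n - 1 := (hp1 _ hp).1
  have hone : {l ∈ S₁.2 | Sum.inl (φ i) ∈ l} = {Bblock n φ i} := by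
    rw [hS2eq]
    ext l
    constructor
    · rintro ⟨⟨j, rfl⟩, hmem⟩
      have : i = j := φ.injective (mem_Bblock_inl.mp hmem)
      simp [this]
    · rintro rfl
      exact ⟨⟨i, rfl⟩, mem_Bblock_inl.mpr rfl⟩
  rw [hone, Set.ncard_singleton] at hcnt
  omega

lemma keyA {n : ℕ} (hn : 4 ≤ n) (φ : Equiv.Perm (Fin n)) (S₁ S₂ : MSimplex n)
    (hd : IsDecomp n φ S₁ S₂) (hAne : S₁ ≠ SimplexA n) (i : Fin n) :
    ¬(Ablock n i ∈ S₁.2 ∧ Sum.inl i ∈ S₁.1) := by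
  rintro ⟨hAl, hb⟩
  obtain ⟨hu, hdis, hc1, hc2, hbu, hbdis, hbc1, hbc2, hl1, hl2, hp1, hp2⟩ := hd
  have hni : (Sum.inl i : MPoint n) ∉ Ablock n i := fun h => (mem_Ablock_inl.mp h) rfl
  have hcardInt : (Ablock n i ∩ S₁.1).ncard = n - 1 := (hl1 _ hAl).1
  have hT : insert (Sum.inl i) (Ablock n i ∩ S₁.1) ⊆ S₁.1 := by
    rintro x (rfl | hx)
    · exact hb
    · exact hx.2
  have hTc : (insert (Sum.inl i) (Ablock n i ∩ S₁.1)).ncard = n := by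
    rw [Set.ncard_insert_of_notMem (fun h => hni h.1), hcardInt]; omega
  have hS1eq : insert (Sum.inl i) (Ablock n i ∩ S₁.1) = S₁.1 :=
    Set.eq_of_subset_of_ncard_le hT (by rw [hTc, hc1])
  have hsub : ∀ x ∈ S₁.1, x = Sum.inl i ∨ x ∈ Ablock n i := by
    intro x hx
    rw [← hS1eq] at hx
    rcases hx with rfl | hx
    · exact Or.inl rfl
    · exact Or.inr hx.1
  have hinr : ∀ x : Fin n, Sum.inr x ∈ S₁.1 → x = i := by
    intro x hx
    rcases hsub _ hx with h | h
    · exact absurd h (by simp)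
    · exact mem_Ablock_inr.mp h
  -- no B-block lies in S₁.2
  have hnoB : ∀ j, Bblock n φ j ∉ S₁.2 := by
    intro j hj
    have h1 : (Bblock n φ j ∩ S₁.1).ncard = n - 1 := (hl1 _ hj).1
    have h2 : Bblock n φ j ∩ S₁.1 ⊆ {Sum.inr i, Sum.inl (φ j)} := by
      rintro (x | x) ⟨hxB, hxS⟩
      · exact Or.inr (by rw [mem_Bblock_inl.mp hxB]; exact rfl)
      · exact Or.inl (by rw [hinr x hxS])
    have := ncard_le_two h2
    omega
  have hsubA : S₁.2 ⊆ ABlocks n := by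
    intro l hl
    have hlm : l ∈ MBlocks n φ := by
      rw [← hbu]; exact Set.mem_union_left _ hl
    rcases hlm with hA | hB'
    · exact hA
    · obtain ⟨j, rfl⟩ := hB'
      exact absurd hl (hnoB j)
  have hS2eq : S₁.2 = ABlocks n :=
    Set.eq_of_subset_of_ncard_le hsubA (by rw [ncard_ABlocks, hbc1])
  have hne : S₁.1 ≠ Set.range Sum.inl := by
    intro he
    exact hAne (Prod.ext he hS2eq)
  have hnsub : ¬ S₁.1 ⊆ Set.range Sum.inl := by
    intro hs
    exact hne (Set.eq_of_subset_of_ncard_le hs (by rw [ncard_range_inl, hc1]))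
  obtain ⟨p, hp, hpn⟩ := Set.not_subset.mp hnsub
  have hpval : p = Sum.inr i := by
    rcases hsub p hp with rfl | hpB
    · exact absurd ⟨i, rfl⟩ hpn
    · rcases p with x | x
      · exact absurd ⟨x, rfl⟩ hpn
      · rw [mem_Ablock_inr.mp hpB]
  subst hpval
  have hcnt : {l ∈ S₁.2 | Sum.inr i ∈ l}.ncard = n - 1 := (hp1 _ hp).1
  have hone : {l ∈ S₁.2 | Sum.inr i ∈ l} = {Ablock n i} := by
    rw [hS2eq]
    ext l
    constructor
    · rintro ⟨⟨j, rfl⟩, hmem⟩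
      have : i = j := mem_Ablock_inr.mp hmem
      simp [this]
    · rintro rfl
      exact ⟨⟨i, rfl⟩, mem_Ablock_inr.mpr rfl⟩
  rw [hone, Set.ncard_singleton] at hcnt
  omega

lemma IsDecomp.symm {n : ℕ} {φ : Equiv.Perm (Fin n)} {S₁ S₂ : MSimplex n}
    (hd : IsDecomp n φ S₁ S₂) : IsDecomp n φ S₂ S₁ := by
  obtain ⟨h1, h2, h3, h4, h5, h6, h7, h8, h9, h10, h11, h12⟩ := hd
  exact ⟨by rwa [Set.union_comm], h2.symm, h4, h3, by rwa [Set.union_comm], h6.symm, h8, h7,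
    h10, h9, h12, h11⟩

end Aux

/-- In a special decomposition, no simplex contains both B_i and b_i, nor both A_i and a_i. -/
theorem stmt5 (n : ℕ) (hn : 4 ≤ n) (φ : Equiv.Perm (Fin n)) (S₁ S₂ : MSimplex n)
    (h : IsSpecialDecomp n φ S₁ S₂) (i : Fin n) :
    ¬(Bblock n φ i ∈ S₁.2 ∧ Sum.inr i ∈ S₁.1) ∧
    ¬(Bblock n φ i ∈ S₂.2 ∧ Sum.inr i ∈ S₂.1) ∧
    ¬(Ablock n i ∈ S₁.2 ∧ Sum.inl i ∈ S₁.1) ∧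
    ¬(Ablock n i ∈ S₂.2 ∧ Sum.inl i ∈ S₂.1) := by
  obtain ⟨hd, hA1, hB1, hA2, hB2⟩ := h
  exact ⟨keyB hn φ S₁ S₂ hd hB1 i, keyB hn φ S₂ S₁ hd.symm hB2 i,
    keyA hn φ S₁ S₂ hd hA1 i, keyA hn φ S₂ S₁ hd.symm hA2 i⟩
end
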